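/- arXiv:2501.05642 — 5 statements merged into one kernel-verified Lean document; each statement's English description precedes it below -/
import Mathlib

section
/- If Σ_{i=1}^{N−1} c_i² ≤ 1, then for every η > 0 the quadratic penalty function w ↦ Q(w;η) = F(w) + (1/(4η))‖Dw‖² is convex on ℝ^{Nn}. -/
open scoped BigOperators InnerProductSpace

noncomputable section

/-- Block space `ℝ^{Nn}` with `N = K+1` blocks of size `n`, with the Euclidean norm. -/
abbrev Blk (K n : ℕ) : Type := PiLp 2 fun _ : Fin (K + 1) => EuclideanSpace ℝ (Fin n)

/-- `Dmap c w = w_N − Σ_{i=1}^{N−1} c_i w_i`. -/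
def Dmap {K n : ℕ} (c : Fin K → ℝ) (w : Blk K n) : EuclideanSpace ℝ (Fin n) :=
  w (Fin.last K) - ∑ i : Fin K, c i • w i.castSucc

/-- `f(w) = Σ_i ‖A w_i − b_i‖²`. -/
def fobj {K m n : ℕ} (A : Matrix (Fin m) (Fin n) ℝ) (b : Blk K m) (w : Blk K n) : ℝ :=
  ∑ i : Fin (K + 1), ‖Matrix.toEuclideanLin A (w i) - b i‖ ^ 2

/-- `F(w) = f(w) − (1/2)‖A(Dw) − Db‖²`. -/
def Fobj {K m n : ℕ} (A : Matrix (Fin m) (Fin n) ℝ) (b : Blk K m) (c : Fin K → ℝ)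
    (w : Blk K n) : ℝ :=
  fobj A b w - (1 / 2) * ‖Matrix.toEuclideanLin A (Dmap c w) - Dmap c b‖ ^ 2

/-- The quadratic penalty function `Q(w;η) = F(w) + (1/(4η))‖Dw‖²`. -/
def Qpen {K m n : ℕ} (A : Matrix (Fin m) (Fin n) ℝ) (b : Blk K m) (c : Fin K → ℝ)
    (η : ℝ) (w : Blk K n) : ℝ :=
  Fobj A b c w + (1 / (4 * η)) * ‖Dmap c w‖ ^ 2

/-- The adjoint `Dᵀ` of `Dmap`, given blockwise by `(Dᵀu)_i = −c_i u` for `i < N` and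
`(Dᵀu)_N = u`. -/
def DmapT {K n : ℕ} (c : Fin K → ℝ) (u : EuclideanSpace ℝ (Fin n)) : Blk K n :=
  WithLp.toLp 2 (Fin.snoc (fun i : Fin K => -(c i) • u) u)

/-
The function `Q` is a quadratic polynomial, so along any segment it satisfies
`Q(a x + t y) = a Q(x) + t Q(y) - a t q(x - y)` for `a + t = 1`, where `q` is its quadratic part,
i.e. `Q` with `b = 0`. Convexity thus reduces to `q ≥ 0`. The penalty term of `q` is nonnegative,
and Cauchy–Schwarz with the coefficient vector `(-c_1, …, -c_{N-1}, 1)`, whose squared norm is at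
most `2`, gives `‖A(Dd)‖² ≤ 2 Σ_i ‖A d_i‖²`, which is exactly what makes `F`'s part of `q`
nonnegative.
-/

section InnerProductSpace

variable {E F : Type*} [NormedAddCommGroup E] [InnerProductSpace ℝ E]
  [NormedAddCommGroup F] [InnerProductSpace ℝ F]

lemma norm_smul_add_smul_sq (u v : E) {a t : ℝ} (hat : a + t = 1) :
    ‖a • u + t • v‖ ^ 2 = a * ‖u‖ ^ 2 + t * ‖v‖ ^ 2 - a * t * ‖u - v‖ ^ 2 := by
  obtain rfl : t = 1 - a := by linarith
  simp only [← real_inner_self_eq_norm_sq, inner_add_left, inner_add_right, inner_sub_left,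
    inner_sub_right, real_inner_smul_left, real_inner_smul_right, real_inner_comm u v]
  ring

lemma norm_map_smul_add_smul_sub_sq (L : E →ₗ[ℝ] F) (v : F) (x y : E) {a t : ℝ}
    (hat : a + t = 1) :
    ‖L (a • x + t • y) - v‖ ^ 2 =
      a * ‖L x - v‖ ^ 2 + t * ‖L y - v‖ ^ 2 - a * t * ‖L (x - y)‖ ^ 2 := by
  have hcombo : L (a • x + t • y) - v = a • (L x - v) + t • (L y - v) := by
    obtain rfl : t = 1 - a := by linarith
    rw [map_add, map_smul, map_smul]
    module
  rw [hcombo, norm_smul_add_smul_sq _ _ hat, sub_sub_sub_cancel_right, map_sub]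

end InnerProductSpace

lemma norm_sum_smul_sq_le {ι E : Type*} [SeminormedAddCommGroup E] [NormedSpace ℝ E]
    (s : Finset ι) (f : ι → ℝ) (u : ι → E) :
    ‖∑ i ∈ s, f i • u i‖ ^ 2 ≤ (∑ i ∈ s, f i ^ 2) * ∑ i ∈ s, ‖u i‖ ^ 2 := by
  have htriangle : ‖∑ i ∈ s, f i • u i‖ ≤ ∑ i ∈ s, |f i| * ‖u i‖ :=
    (norm_sum_le _ _).trans_eq (by simp only [norm_smul, Real.norm_eq_abs])
  calc ‖∑ i ∈ s, f i • u i‖ ^ 2 ≤ (∑ i ∈ s, |f i| * ‖u i‖) ^ 2 := by gcongr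
    _ ≤ (∑ i ∈ s, |f i| ^ 2) * ∑ i ∈ s, ‖u i‖ ^ 2 := Finset.sum_mul_sq_le_sq_mul_sq _ _ _
    _ = (∑ i ∈ s, f i ^ 2) * ∑ i ∈ s, ‖u i‖ ^ 2 := by simp only [sq_abs]

section Dmap

variable {K n : ℕ}

def Dmapₗ (c : Fin K → ℝ) : Blk K n →ₗ[ℝ] EuclideanSpace ℝ (Fin n) where
  toFun := Dmap c
  map_add' x y := by
    simp only [Dmap, PiLp.add_apply, smul_add, Finset.sum_add_distrib]
    abel
  map_smul' a w := by
    simp only [Dmap, PiLp.smul_apply, smul_sub, Finset.smul_sum, smul_comm a, RingHom.id_apply]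

@[simp]
lemma Dmapₗ_apply (c : Fin K → ℝ) (w : Blk K n) : Dmapₗ c w = Dmap c w := rfl

lemma Dmap_eq_sum (c : Fin K → ℝ) (w : Blk K n) :
    Dmap c w = ∑ i, (Fin.snoc (-c) 1 : Fin (K + 1) → ℝ) i • w i := by
  simp [Dmap, Fin.sum_univ_castSucc, sub_eq_neg_add, Finset.sum_neg_distrib]

lemma norm_map_Dmap_sq_le {G : Type*} [SeminormedAddCommGroup G] [NormedSpace ℝ G]
    (L : EuclideanSpace ℝ (Fin n) →ₗ[ℝ] G) (c : Fin K → ℝ) (w : Blk K n) :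
    ‖L (Dmap c w)‖ ^ 2 ≤ (∑ i, c i ^ 2 + 1) * ∑ i, ‖L (w i)‖ ^ 2 := by
  rw [Dmap_eq_sum, map_sum]
  simp only [map_smul]
  refine (norm_sum_smul_sq_le _ _ _).trans_eq ?_
  simp [Fin.sum_univ_castSucc]

end Dmap

section Qpen

variable {K m n : ℕ} (A : Matrix (Fin m) (Fin n) ℝ) (c : Fin K → ℝ) (η : ℝ)

lemma Dmap_zero (c : Fin K → ℝ) : Dmap c (0 : Blk K m) = 0 := map_zero (Dmapₗ c)

lemma fobj_smul_add_smul (b : Blk K m) (x y : Blk K n) {a t : ℝ} (hat : a + t = 1) :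
    fobj A b (a • x + t • y) = a * fobj A b x + t * fobj A b y - a * t * fobj A 0 (x - y) := by
  simp only [fobj, Finset.mul_sum, ← Finset.sum_add_distrib, ← Finset.sum_sub_distrib]
  refine Finset.sum_congr rfl fun i _ => ?_
  simpa using norm_map_smul_add_smul_sub_sq (Matrix.toEuclideanLin A) (b i) (x i) (y i) hat

lemma Qpen_smul_add_smul (b : Blk K m) (x y : Blk K n) {a t : ℝ} (hat : a + t = 1) :
    Qpen A b c η (a • x + t • y) =
      a * Qpen A b c η x + t * Qpen A b c η y - a * t * Qpen A 0 c η (x - y) := by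
  have hD := norm_map_smul_add_smul_sub_sq
    (Matrix.toEuclideanLin A ∘ₗ Dmapₗ c) (Dmap c b) x y hat
  have hP := norm_map_smul_add_smul_sub_sq (Dmapₗ c) 0 x y hat
  simp only [LinearMap.comp_apply, Dmapₗ_apply, sub_zero] at hD hP
  simp only [Qpen, Fobj, fobj_smul_add_smul A b x y hat, hD, hP, Dmap_zero, sub_zero]
  ring

lemma Qpen_zero_nonneg (hc1 : ∑ i, c i ^ 2 ≤ 1) (hη : 0 ≤ η) (w : Blk K n) :
    0 ≤ Qpen A 0 c η w := by
  have hD : ‖Matrix.toEuclideanLin A (Dmap c w)‖ ^ 2 ≤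
      2 * ∑ i, ‖Matrix.toEuclideanLin A (w i)‖ ^ 2 :=
    (norm_map_Dmap_sq_le _ c w).trans (by gcongr; linarith)
  have hpen : 0 ≤ 1 / (4 * η) * ‖Dmap c w‖ ^ 2 := by positivity
  simp only [Qpen, Fobj, fobj, PiLp.zero_apply, sub_zero, Dmap_zero]
  linarith

end Qpen

theorem stmt6_general {K m n : ℕ} (A : Matrix (Fin m) (Fin n) ℝ) (b : Blk K m)
    (c : Fin K → ℝ) (hc1 : ∑ i, c i ^ 2 ≤ 1)
    (η : ℝ) (hη : 0 < η) :
    ConvexOn ℝ Set.univ (Qpen A b c η) := by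
  refine ⟨convex_univ, fun x _ y _ a t ha ht hat => ?_⟩
  rw [smul_eq_mul, smul_eq_mul, Qpen_smul_add_smul A c η b x y hat]
  have := mul_nonneg (mul_nonneg ha ht) (Qpen_zero_nonneg A c η hc1 hη.le (x - y))
  linarith

/-- If `Σ c_i² ≤ 1`, then for every `η > 0` the quadratic penalty function
`w ↦ Q(w;η)` is convex on `ℝ^{Nn}`. -/
theorem stmt6 {K m n : ℕ} (A : Matrix (Fin m) (Fin n) ℝ) (b : Blk K m)
    (c : Fin K → ℝ) (hc : ∀ i, 0 ≤ c i) (hc1 : ∑ i, c i ^ 2 ≤ 1)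
    (η : ℝ) (hη : 0 < η) :
    ConvexOn ℝ Set.univ (Qpen A b c η) :=
  stmt6_general A b c hc1 η hη
end
end

section
/- Let Q : ℝ^d → ℝ be differentiable, let η > 0, let w ∈ ℝ^d with w ≥ 0, and set w₊ = (w − η∇Q(w))₊. If ‖w − w₊‖ ≤ η², then, with J = {j ∈ {1,…,d} : w_j > η²}: (a) ‖(∇Q(w))_J‖ ≤ η, where (∇Q(w))_J is the subvector of ∇Q(w) indexed by J; and (b) ∇Q(w)_j ≥ −η for every coordinate j. -/
open scoped BigOperators

/-- If the projected gradient step moves `w` by at most `η²`, then `w` is `η`-optimal: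
the gradient restricted to `J = {j : w_j > η²}` has norm at most `η`, and every
gradient coordinate is at least `−η`. -/
theorem stmt11 {d : ℕ} (Q : EuclideanSpace ℝ (Fin d) → ℝ) (hQdiff : Differentiable ℝ Q)
    (η : ℝ) (hη : 0 < η) (w wp : EuclideanSpace ℝ (Fin d))
    (hw0 : ∀ j, 0 ≤ w j)
    (hwp : ∀ j, wp j = max (w j - η * gradient Q w j) 0)
    (hclose : ‖w - wp‖ ≤ η ^ 2) :
    Real.sqrt (∑ j, if η ^ 2 < w j then gradient Q w j ^ 2 else 0) ≤ η
    ∧ ∀ j, -η ≤ gradient Q w j := by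
  set g := gradient Q w with hg
  have hnormeq : ‖w - wp‖ = Real.sqrt (∑ j, (w j - wp j) ^ 2) := by
    rw [EuclideanSpace.norm_eq]
    congr 1
    apply Finset.sum_congr rfl
    intro j _
    rw [show (w - wp) j = w j - wp j from rfl, Real.norm_eq_abs, sq_abs]
  have hsumle : ∑ j, (w j - wp j) ^ 2 ≤ (η ^ 2) ^ 2 := by
    have h1 : Real.sqrt (∑ j, (w j - wp j) ^ 2) ≤ η ^ 2 := hnormeq ▸ hclose
    have h2 : 0 ≤ ∑ j, (w j - wp j) ^ 2 :=
      Finset.sum_nonneg fun j _ => sq_nonneg _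
    nlinarith [Real.sq_sqrt h2, Real.sqrt_nonneg (∑ j, (w j - wp j) ^ 2)]
  have hcoord : ∀ j, |w j - wp j| ≤ η ^ 2 := by
    intro j
    have hsingle : (w j - wp j) ^ 2 ≤ ∑ i, (w i - wp i) ^ 2 :=
      Finset.single_le_sum (f := fun i => (w i - wp i) ^ 2)
        (fun i _ => sq_nonneg _) (Finset.mem_univ j)
    nlinarith [abs_nonneg (w j - wp j), sq_abs (w j - wp j), sq_nonneg η]
  have hb : ∀ j, -η ≤ g j := by
    intro j
    have h1 : wp j ≥ w j - η * g j := by rw [hwp j]; exact le_max_left _ _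
    have h2 : -(η ^ 2) ≤ w j - wp j := neg_le_of_abs_le (hcoord j)
    nlinarith
  refine ⟨?_, hb⟩
  have hkey : ∀ j, η ^ 2 < w j → wp j = w j - η * g j := by
    intro j hj
    rw [hwp j]
    rcases le_or_gt 0 (w j - η * g j) with h | h
    · exact max_eq_left h
    · exfalso
      have hz : wp j = 0 := by rw [hwp j]; exact max_eq_right h.le
      have h3 := le_of_abs_le (hcoord j)
      rw [hz] at h3
      linarith
  have hsum : ∑ j, (if η ^ 2 < w j then g j ^ 2 else 0) ≤ η ^ 2 := by
    have hle : ∀ j, (if η ^ 2 < w j then g j ^ 2 else 0) ≤ (w j - wp j) ^ 2 / η ^ 2 := by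
      intro j
      split_ifs with h
      · have heq : (w j - wp j) ^ 2 / η ^ 2 = g j ^ 2 := by
          rw [hkey j h]; field_simp; ring
        exact heq.ge
      · positivity
    calc ∑ j, (if η ^ 2 < w j then g j ^ 2 else 0)
        ≤ ∑ j, (w j - wp j) ^ 2 / η ^ 2 := Finset.sum_le_sum fun j _ => hle j
      _ = (∑ j, (w j - wp j) ^ 2) / η ^ 2 := by rw [Finset.sum_div]
      _ ≤ (η ^ 2) ^ 2 / η ^ 2 := by gcongr
      _ = η ^ 2 := by field_simp
  calc Real.sqrt (∑ j, if η ^ 2 < w j then g j ^ 2 else 0)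
      ≤ Real.sqrt (η ^ 2) := Real.sqrt_le_sqrt hsum
    _ = η := Real.sqrt_sq hη.le
end

section
/- Let Q : ℝ^d → ℝ be convex and differentiable, let η > 0, and let u, u* ∈ ℝ^d with u ≥ 0 and u* ≥ 0. Let J = {j : u_j > η²} and suppose ‖(∇Q(u))_J‖ ≤ η and ∇Q(u)_j ≥ −η for every coordinate j. Then Q(u) − Q(u*) ≤ η(‖u − u*‖₁ + η‖∇Q(u)‖₁ + d η²). -/
open scoped BigOperators

open scoped InnerProductSpace in
lemma conv_grad_ineq {F : Type*} [NormedAddCommGroup F] [InnerProductSpace ℝ F] [CompleteSpace F]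
    {Q : F → ℝ} (hconv : ConvexOn ℝ Set.univ Q) (hQdiff : Differentiable ℝ Q)
    (x y : F) : Q x - Q y ≤ ⟪gradient Q x, x - y⟫_ℝ := by
  have hF : HasFDerivAt Q (InnerProductSpace.toDual ℝ F (gradient Q x)) x :=
    (hQdiff x).hasGradientAt
  have hφ : HasDerivAt (fun t : ℝ => x + t • (y - x)) (y - x) 0 := by
    have h1 : HasDerivAt (fun t : ℝ => t • (y - x)) ((1 : ℝ) • (y - x)) 0 :=
      (hasDerivAt_id 0).smul_const (y - x)
    simpa using h1.const_add x
  have hder : HasDerivAt (fun t : ℝ => Q (x + t • (y - x)))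
      (⟪gradient Q x, y - x⟫_ℝ) 0 := by
    have hF' : HasFDerivAt Q (InnerProductSpace.toDual ℝ F (gradient Q x))
        (x + (0 : ℝ) • (y - x)) := by simpa using hF
    have := hF'.comp_hasDerivAt (0 : ℝ) hφ
    simpa [InnerProductSpace.toDual_apply_apply, Function.comp_def] using this
  have hgconv : ConvexOn ℝ Set.univ (fun t : ℝ => Q (x + t • (y - x))) := by
    have := hconv.comp_affineMap (AffineMap.lineMap x y)
    simp only [Set.preimage_univ] at this
    refine this.congr fun t _ => ?_
    simp [AffineMap.lineMap_apply, add_comm]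
  have hslope := hgconv.le_slope_of_hasDerivAt (Set.mem_univ (0 : ℝ))
    (Set.mem_univ (1 : ℝ)) zero_lt_one hder
  have : ⟪gradient Q x, y - x⟫_ℝ ≤ Q y - Q x := by
    simpa [slope_def_field] using hslope
  have h2 : ⟪gradient Q x, x - y⟫_ℝ = -⟪gradient Q x, y - x⟫_ℝ := by
    rw [← inner_neg_right, neg_sub]
  linarith

/-- Suboptimality bound for an `η`-optimal point of a convex differentiable function
over the nonnegative orthant:
`Q(u) − Q(u*) ≤ η(‖u − u*‖₁ + η‖∇Q(u)‖₁ + d η²)`. -/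
theorem stmt12 {d : ℕ} (Q : EuclideanSpace ℝ (Fin d) → ℝ)
    (hconv : ConvexOn ℝ Set.univ Q) (hQdiff : Differentiable ℝ Q)
    (η : ℝ) (hη : 0 < η) (u us : EuclideanSpace ℝ (Fin d))
    (hu0 : ∀ j, 0 ≤ u j) (hus0 : ∀ j, 0 ≤ us j)
    (hJ : Real.sqrt (∑ j, if η ^ 2 < u j then gradient Q u j ^ 2 else 0) ≤ η)
    (hlb : ∀ j, -η ≤ gradient Q u j) :
    Q u - Q us ≤
      η * ((∑ j, |u j - us j|) + η * (∑ j, |gradient Q u j|) + d * η ^ 2) := by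
  have key := conv_grad_ineq hconv hQdiff u us
  have hinner : (inner ℝ (gradient Q u) (u - us) : ℝ)
      = ∑ j, gradient Q u j * (u j - us j) := by
    rw [PiLp.inner_apply]
    refine Finset.sum_congr rfl fun j _ => ?_
    simp [RCLike.inner_apply, mul_comm]
  -- per-coordinate bound
  have hS : (0 : ℝ) ≤ ∑ j, if η ^ 2 < u j then gradient Q u j ^ 2 else 0 := by
    apply Finset.sum_nonneg; intro j _
    split <;> positivity
  have hSle : (∑ j, if η ^ 2 < u j then gradient Q u j ^ 2 else 0) ≤ η ^ 2 := by
    have := Real.sqrt_le_sqrt (le_of_eq (Real.sqrt_sq hη.le).symm) -- dummy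
    nlinarith [Real.sq_sqrt hS, Real.sqrt_nonneg
      (∑ j, if η ^ 2 < u j then gradient Q u j ^ 2 else 0), hJ]
  have hcoord : ∀ j, gradient Q u j * (u j - us j)
      ≤ η * |u j - us j| + η ^ 2 * |gradient Q u j| + η ^ 3 := by
    intro j
    set g := gradient Q u j with hg
    by_cases hj : η ^ 2 < u j
    · have hg2 : g ^ 2 ≤ ∑ i, if η ^ 2 < u i then gradient Q u i ^ 2 else 0 := by
        have := Finset.single_le_sum
          (f := fun i => if η ^ 2 < u i then gradient Q u i ^ 2 else 0)
          (fun i _ => by dsimp only; split <;> positivity) (Finset.mem_univ j)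
        simpa [hj] using this
      have hgle : |g| ≤ η := by
        nlinarith [abs_nonneg g, sq_abs g]
      have h1 : g * (u j - us j) ≤ |g| * |u j - us j| := by
        calc g * (u j - us j) ≤ |g * (u j - us j)| := le_abs_self _
          _ = |g| * |u j - us j| := abs_mul _ _
      nlinarith [abs_nonneg (u j - us j), abs_nonneg g, hη.le]
    · push_neg at hj
      have h1 := hlb j
      have h2 := hu0 j
      have h3 := hus0 j
      have h4 := le_abs_self (u j - us j)
      have h5 := neg_abs_le (u j - us j)
      have h6 := le_abs_self g
      have h7 := neg_abs_le g
      nlinarith [mul_nonneg hη.le h3, mul_nonneg (abs_nonneg g) h2,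
        mul_nonneg hη.le (abs_nonneg (u j - us j))]
  calc Q u - Q us ≤ ∑ j, gradient Q u j * (u j - us j) := by
        rw [← hinner]; exact key
    _ ≤ ∑ j, (η * |u j - us j| + η ^ 2 * |gradient Q u j| + η ^ 3) :=
        Finset.sum_le_sum fun j _ => hcoord j
    _ = η * ((∑ j, |u j - us j|) + η * (∑ j, |gradient Q u j|) + d * η ^ 2) := by
        simp [Finset.sum_add_distrib, ← Finset.mul_sum, Finset.sum_const,
          Finset.card_univ]
        ring
end

section
/- Suppose Σ_{i=1}^{N−1} c_i² ≤ 1, A ≠ 0, and 0 < η ≤ (2 − Σ_{i=1}^{N−1} c_i²)/(4λ_max(AᵀA)). Let u* ≥ 0 with Du* = 0 be a minimizer of F over {w ∈ ℝ^{Nn} : w ≥ 0, Dw = 0}, and let u be an η-optimal solution of min_{w≥0} Q(w;η). Then Q(u;η) − F(u*) ≤ η·C, where C = (5/2)√(Nn)‖u − u*‖ + √(Nn)‖∇F(u*)‖η + Nn η². -/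
open scoped BigOperators InnerProductSpace

noncomputable section

namespace Stmt13

variable {K m n : ℕ}

lemma eucl_inner (x y : EuclideanSpace ℝ (Fin n)) : ⟪x, y⟫_ℝ = ∑ j, x j * y j := by
  simp [PiLp.inner_apply, RCLike.inner_apply, mul_comm]

lemma blk_inner (x y : Blk K n) : ⟪x, y⟫_ℝ = ∑ i, ⟪x i, y i⟫_ℝ := PiLp.inner_apply x y

lemma blk_norm_sq (x : Blk K n) : ‖x‖^2 = ∑ i, ‖x i‖^2 := PiLp.norm_sq_eq_of_L2 _ x

lemma eucl_norm_sq (x : EuclideanSpace ℝ (Fin n)) : ‖x‖^2 = ∑ j, (x j)^2 := by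
  rw [PiLp.norm_sq_eq_of_L2]; simp [sq_abs]

def Tmul (A : Matrix (Fin m) (Fin n) ℝ) (x : EuclideanSpace ℝ (Fin n)) :
    EuclideanSpace ℝ (Fin m) := Matrix.toEuclideanLin A x

lemma Tmul_apply (A : Matrix (Fin m) (Fin n) ℝ) (x : EuclideanSpace ℝ (Fin n)) (i : Fin m) :
    Tmul A x i = ∑ j, A i j * x j := by
  simp [Tmul, Matrix.toEuclideanLin, Matrix.toLin'_apply, Matrix.mulVec, dotProduct]

lemma Tmul_add (A : Matrix (Fin m) (Fin n) ℝ) (x y : EuclideanSpace ℝ (Fin n)) :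
    Tmul A (x + y) = Tmul A x + Tmul A y := by simp [Tmul]

lemma Tmul_sub (A : Matrix (Fin m) (Fin n) ℝ) (x y : EuclideanSpace ℝ (Fin n)) :
    Tmul A (x - y) = Tmul A x - Tmul A y := by simp [Tmul]

lemma Tadj_inner (A : Matrix (Fin m) (Fin n) ℝ) (y : EuclideanSpace ℝ (Fin m))
    (x : EuclideanSpace ℝ (Fin n)) : ⟪Tmul A.transpose y, x⟫_ℝ = ⟪y, Tmul A x⟫_ℝ := by
  simp only [eucl_inner, Tmul_apply, Matrix.transpose_apply, Finset.sum_mul, Finset.mul_sum]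
  rw [Finset.sum_comm]
  apply Finset.sum_congr rfl; intro i _; apply Finset.sum_congr rfl; intro j _; ring

lemma Dmap_add (c : Fin K → ℝ) (w v : Blk K n) : Dmap c (w + v) = Dmap c w + Dmap c v := by
  simp only [Dmap]
  have : ∀ i : Fin (K+1), (w + v) i = w i + v i := fun _ => rfl
  simp [this, smul_add, Finset.sum_add_distrib]; abel

lemma Dmap_sub (c : Fin K → ℝ) (w v : Blk K n) : Dmap c (w - v) = Dmap c w - Dmap c v := by
  simp only [Dmap]
  have : ∀ i : Fin (K+1), (w - v) i = w i - v i := fun _ => rfl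
  simp [this, smul_sub, Finset.sum_sub_distrib]; abel

lemma Dmap_neg (c : Fin K → ℝ) (v : Blk K n) : Dmap c (-v) = - Dmap c v := by
  simp only [Dmap]
  have : ∀ i : Fin (K+1), (-v) i = -(v i) := fun _ => rfl
  simp [this]; abel

lemma DmapT_inner (c : Fin K → ℝ) (y : EuclideanSpace ℝ (Fin n)) (v : Blk K n) :
    ∑ i, ⟪DmapT c y i, v i⟫_ℝ = ⟪y, Dmap c v⟫_ℝ := by
  rw [Fin.sum_univ_castSucc]
  simp only [DmapT, PiLp.toLp_apply, Fin.snoc_castSucc, Fin.snoc_last, Dmap]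
  rw [inner_sub_right]
  have h1 : ∀ i : Fin K, ⟪(-(c i) • y : EuclideanSpace ℝ (Fin n)), v i.castSucc⟫_ℝ
      = -(c i) * ⟪y, v i.castSucc⟫_ℝ := fun i => real_inner_smul_left _ _ _
  rw [inner_sum]
  simp only [h1, real_inner_smul_right]
  have : ∑ x : Fin K, -c x * ⟪y, v x.castSucc⟫_ℝ = -∑ x : Fin K, c x * ⟪y, v x.castSucc⟫_ℝ := by
    rw [← Finset.sum_neg_distrib]; exact Finset.sum_congr rfl fun i _ => by ring
  rw [this]; ring

/-- the gradient of `F`. -/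
def gradF (A : Matrix (Fin m) (Fin n) ℝ) (b : Blk K m) (c : Fin K → ℝ) (w : Blk K n) :
    Blk K n :=
  WithLp.toLp 2 fun i => (2:ℝ) • Tmul A.transpose (Tmul A (w i) - b i) -
    DmapT c (Tmul A.transpose (Tmul A (Dmap c w) - Dmap c b)) i

/-- the gradient of `Q`. -/
def gradQ (A : Matrix (Fin m) (Fin n) ℝ) (b : Blk K m) (c : Fin K → ℝ) (η : ℝ)
    (w : Blk K n) : Blk K n :=
  gradF A b c w + (1/(2*η)) • DmapT c (Dmap c w)

/-- pure quadratic part of `F`. -/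
def qF (A : Matrix (Fin m) (Fin n) ℝ) (c : Fin K → ℝ) (v : Blk K n) : ℝ :=
  (∑ i, ‖Tmul A (v i)‖^2) - (1/2)*‖Tmul A (Dmap c v)‖^2

/-- pure quadratic part of `Q`. -/
def qQ (A : Matrix (Fin m) (Fin n) ℝ) (c : Fin K → ℝ) (η : ℝ) (v : Blk K n) : ℝ :=
  qF A c v + (1/(4*η))*‖Dmap c v‖^2


lemma Dmap_lin_bound {F : Type*} [NormedAddCommGroup F] [NormedSpace ℝ F]
    (c : Fin K → ℝ) (φ : EuclideanSpace ℝ (Fin n) →ₗ[ℝ] F) (v : Blk K n) :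
    ‖φ (Dmap c v)‖^2 ≤ (1 + ∑ i, c i^2) * ∑ i, ‖φ (v i)‖^2 := by
  have h1 : φ (Dmap c v) = φ (v (Fin.last K)) - ∑ i : Fin K, c i • φ (v i.castSucc) := by
    rw [Dmap, map_sub, map_sum]
    congr 1
    exact Finset.sum_congr rfl fun i _ => (map_smul φ _ _)
  have h2 : ‖φ (Dmap c v)‖ ≤ ∑ i : Fin (K+1),
      ((Fin.snoc (fun i : Fin K => |c i|) (1:ℝ) : Fin (K+1) → ℝ) i) * ‖φ (v i)‖ := by
    rw [Fin.sum_univ_castSucc]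
    simp only [Fin.snoc_castSucc, Fin.snoc_last, one_mul]
    rw [h1]
    refine le_trans (norm_sub_le _ _) ?_
    rw [add_comm]
    gcongr
    refine le_trans (norm_sum_le _ _) ?_
    refine Finset.sum_le_sum fun i _ => ?_
    rw [norm_smul]
    simp [Real.norm_eq_abs]
  have h3 : (∑ i : Fin (K+1), ((Fin.snoc (fun i : Fin K => |c i|) (1:ℝ) : Fin (K+1) → ℝ) i) * ‖φ (v i)‖)^2
      ≤ (∑ i : Fin (K+1), ((Fin.snoc (fun i : Fin K => |c i|) (1:ℝ) : Fin (K+1) → ℝ) i)^2)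
        * ∑ i, ‖φ (v i)‖^2 :=
    Finset.sum_mul_sq_le_sq_mul_sq _ _ _
  have h4 : (∑ i : Fin (K+1), ((Fin.snoc (fun i : Fin K => |c i|) (1:ℝ) : Fin (K+1) → ℝ) i)^2)
      = 1 + ∑ i, c i^2 := by
    rw [Fin.sum_univ_castSucc]
    simp only [Fin.snoc_castSucc, Fin.snoc_last, one_pow, sq_abs]
    ring
  have h5 : (0:ℝ) ≤ ∑ i : Fin (K+1), ((Fin.snoc (fun i : Fin K => |c i|) (1:ℝ) : Fin (K+1) → ℝ) i) * ‖φ (v i)‖ :=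
    le_trans (norm_nonneg _) h2
  calc ‖φ (Dmap c v)‖^2 ≤ (∑ i : Fin (K+1),
        ((Fin.snoc (fun i : Fin K => |c i|) (1:ℝ) : Fin (K+1) → ℝ) i) * ‖φ (v i)‖)^2 := by
        exact pow_le_pow_left₀ (norm_nonneg _) h2 2
    _ ≤ _ := by rw [← h4]; exact h3

lemma Tmul_bound (A : Matrix (Fin m) (Fin n) ℝ) : ∃ CT : ℝ, 0 ≤ CT ∧
    ∀ x : EuclideanSpace ℝ (Fin n), ‖Tmul A x‖ ≤ CT * ‖x‖ := by
  refine ⟨‖(Matrix.toEuclideanLin A).toContinuousLinearMap‖, norm_nonneg _, fun x => ?_⟩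
  exact (Matrix.toEuclideanLin A).toContinuousLinearMap.le_opNorm x

lemma hasGradientAt_of_quad {f : Blk K n → ℝ} {g x : Blk K n} {q : Blk K n → ℝ} (C : ℝ)
    (hexp : ∀ v, f (x + v) = f x + ⟪g, v⟫_ℝ + q v) (hq : ∀ v, |q v| ≤ C * ‖v‖^2) :
    HasGradientAt f g x := by
  rw [hasGradientAt_iff_isLittleO]
  have heq : (fun x' : Blk K n => f x' - f x - ⟪g, x' - x⟫_ℝ) = fun x' => q (x' - x) := by
    funext x'
    have := hexp (x' - x)
    rw [add_sub_cancel] at this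
    linarith
  rw [heq, Asymptotics.isLittleO_iff]
  intro ε hε
  have hC : (0:ℝ) < max C 1 := lt_of_lt_of_le one_pos (le_max_right _ _)
  filter_upwards [Metric.ball_mem_nhds x (div_pos hε hC)] with x' hx'
  rw [Metric.mem_ball, dist_eq_norm] at hx'
  have h1 : |q (x' - x)| ≤ C * ‖x' - x‖^2 := hq _
  have h2 : C * ‖x' - x‖^2 ≤ (max C 1) * ‖x' - x‖^2 := by
    have := le_max_left C 1
    nlinarith [sq_nonneg ‖x' - x‖]
  have h4 : (0:ℝ) ≤ ‖x' - x‖ := norm_nonneg _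
  have h3 : ‖x' - x‖^2 ≤ (ε / max C 1) * ‖x' - x‖ := by nlinarith
  have h5 : (max C 1) * (ε / max C 1) = ε := by field_simp
  rw [Real.norm_eq_abs]
  calc |q (x' - x)| ≤ (max C 1) * ‖x' - x‖^2 := le_trans h1 h2
    _ ≤ (max C 1) * ((ε / max C 1) * ‖x' - x‖) := by
        exact mul_le_mul_of_nonneg_left h3 (le_of_lt hC)
    _ = ε * ‖x' - x‖ := by rw [← mul_assoc, h5]

lemma qF_bound (A : Matrix (Fin m) (Fin n) ℝ) (c : Fin K → ℝ) : ∃ C : ℝ,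
    ∀ v : Blk K n, |qF A c v| ≤ C * ‖v‖^2 := by
  obtain ⟨CT, hCT0, hCT⟩ := Tmul_bound A
  set s := ∑ i, c i^2 with hs
  have hs0 : 0 ≤ s := Finset.sum_nonneg fun i _ => sq_nonneg _
  refine ⟨CT^2 * (1 + (1+s)/2), fun v => ?_⟩
  have h1 : ∀ i : Fin (K+1), ‖Tmul A (v i)‖^2 ≤ CT^2 * ‖v i‖^2 := fun i => by
    have := hCT (v i); nlinarith [norm_nonneg (Tmul A (v i)), norm_nonneg (v i)]
  have h2 : ∑ i, ‖Tmul A (v i)‖^2 ≤ CT^2 * ∑ i, ‖v i‖^2 := by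
    rw [Finset.mul_sum]; exact Finset.sum_le_sum fun i _ => h1 i
  have h3 : ‖Tmul A (Dmap c v)‖^2 ≤ (1+s) * ∑ i, ‖Tmul A (v i)‖^2 := by
    have := Dmap_lin_bound c (Matrix.toEuclideanLin A) v
    exact this
  have h4 : ∑ i, ‖Tmul A (v i)‖^2 ≤ CT^2 * ‖v‖^2 := by rw [blk_norm_sq]; exact h2
  have h5 : (0:ℝ) ≤ ∑ i, ‖Tmul A (v i)‖^2 := Finset.sum_nonneg fun i _ => sq_nonneg _
  have h6 : (0:ℝ) ≤ ‖Tmul A (Dmap c v)‖^2 := sq_nonneg _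
  rw [qF, abs_le]
  constructor <;> nlinarith [sq_nonneg ‖v‖, mul_nonneg (mul_nonneg hCT0 hCT0) (sq_nonneg ‖v‖)]

lemma qQ_bound (A : Matrix (Fin m) (Fin n) ℝ) (c : Fin K → ℝ) (η : ℝ) : ∃ C : ℝ,
    ∀ v : Blk K n, |qQ A c η v| ≤ C * ‖v‖^2 := by
  obtain ⟨CF, hCF⟩ := qF_bound A c (n := n)
  set s := ∑ i, c i^2 with hs
  have hs0 : 0 ≤ s := Finset.sum_nonneg fun i _ => sq_nonneg _
  refine ⟨CF + |1/(4*η)| * (1+s), fun v => ?_⟩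
  have h3 : ‖Dmap c v‖^2 ≤ (1+s) * ∑ i, ‖v i‖^2 := by
    have := Dmap_lin_bound c (LinearMap.id (R := ℝ) (M := EuclideanSpace ℝ (Fin n))) v
    simpa using this
  have h4 : ‖Dmap c v‖^2 ≤ (1+s) * ‖v‖^2 := by rw [blk_norm_sq]; exact h3
  have h5 := hCF v
  rw [qQ]
  refine le_trans (abs_add_le _ _) ?_
  rw [abs_mul]
  have h6 : |‖Dmap c v‖^2| = ‖Dmap c v‖^2 := abs_of_nonneg (sq_nonneg _)
  rw [h6]
  have h7 : |1/(4*η)| * ‖Dmap c v‖^2 ≤ |1/(4*η)| * ((1+s) * ‖v‖^2) := by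
    exact mul_le_mul_of_nonneg_left h4 (abs_nonneg _)
  nlinarith [abs_nonneg (1/(4*η))]

lemma Fobj_expand (A : Matrix (Fin m) (Fin n) ℝ) (b : Blk K m) (c : Fin K → ℝ)
    (w v : Blk K n) :
    Fobj A b c (w + v) = Fobj A b c w + ⟪gradF A b c w, v⟫_ℝ + qF A c v := by
  have hF : ∀ u : Blk K n, Fobj A b c u =
      (∑ i, ‖Tmul A (u i) - b i‖^2) - (1/2)*‖Tmul A (Dmap c u) - Dmap c b‖^2 := fun _ => rfl
  have hDv : Dmap c (w + v) = Dmap c w + Dmap c v := Dmap_add c w v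
  have key1 : ∀ i : Fin (K+1), ‖Tmul A ((w+v) i) - b i‖^2 =
      ‖Tmul A (w i) - b i‖^2 + 2*⟪Tmul A (w i) - b i, Tmul A (v i)⟫_ℝ + ‖Tmul A (v i)‖^2 := by
    intro i
    have h1 : (w+v) i = w i + v i := rfl
    have h2 : Tmul A (w i) + Tmul A (v i) - b i = (Tmul A (w i) - b i) + Tmul A (v i) := by abel
    rw [h1, Tmul_add, h2, norm_add_sq_real]
  have key2 : ‖Tmul A (Dmap c (w+v)) - Dmap c b‖^2 =
      ‖Tmul A (Dmap c w) - Dmap c b‖^2 +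
        2*⟪Tmul A (Dmap c w) - Dmap c b, Tmul A (Dmap c v)⟫_ℝ + ‖Tmul A (Dmap c v)‖^2 := by
    have h2 : Tmul A (Dmap c w) + Tmul A (Dmap c v) - Dmap c b
        = (Tmul A (Dmap c w) - Dmap c b) + Tmul A (Dmap c v) := by abel
    rw [hDv, Tmul_add, h2, norm_add_sq_real]
  have hg : ⟪gradF A b c w, v⟫_ℝ =
      (∑ i, 2*⟪Tmul A (w i) - b i, Tmul A (v i)⟫_ℝ)
        - ⟪Tmul A (Dmap c w) - Dmap c b, Tmul A (Dmap c v)⟫_ℝ := by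
    rw [blk_inner]
    have hcomp : ∀ i : Fin (K+1), ⟪gradF A b c w i, v i⟫_ℝ =
        2*⟪Tmul A (w i) - b i, Tmul A (v i)⟫_ℝ
          - ⟪DmapT c (Tmul A.transpose (Tmul A (Dmap c w) - Dmap c b)) i, v i⟫_ℝ := by
      intro i
      have : gradF A b c w i = (2:ℝ) • Tmul A.transpose (Tmul A (w i) - b i) -
          DmapT c (Tmul A.transpose (Tmul A (Dmap c w) - Dmap c b)) i := rfl
      rw [this, inner_sub_left, real_inner_smul_left, Tadj_inner]
    rw [Finset.sum_congr rfl fun i _ => hcomp i, Finset.sum_sub_distrib,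
      DmapT_inner, Tadj_inner]
  rw [hF, hF, hg, qF]
  rw [Finset.sum_congr rfl fun i _ => key1 i, key2]
  rw [Finset.sum_add_distrib, Finset.sum_add_distrib]
  ring

lemma Qpen_expand (A : Matrix (Fin m) (Fin n) ℝ) (b : Blk K m) (c : Fin K → ℝ) (η : ℝ)
    (w v : Blk K n) :
    Qpen A b c η (w + v) = Qpen A b c η w + ⟪gradQ A b c η w, v⟫_ℝ + qQ A c η v := by
  have hDv : Dmap c (w + v) = Dmap c w + Dmap c v := Dmap_add c w v
  have key3 : ‖Dmap c (w+v)‖^2 = ‖Dmap c w‖^2 + 2*⟪Dmap c w, Dmap c v⟫_ℝ + ‖Dmap c v‖^2 := by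
    rw [hDv, norm_add_sq_real]
  have hg : ⟪gradQ A b c η w, v⟫_ℝ = ⟪gradF A b c w, v⟫_ℝ
      + (1/(2*η)) * ⟪Dmap c w, Dmap c v⟫_ℝ := by
    have h1 : gradQ A b c η w = gradF A b c w + (1/(2*η)) • DmapT c (Dmap c w) := rfl
    rw [h1, inner_add_left, real_inner_smul_left]
    congr 1
    rw [blk_inner, DmapT_inner]
  rw [Qpen, Qpen, Fobj_expand, hg, key3, qQ]
  ring

lemma hasGradientAt_Fobj (A : Matrix (Fin m) (Fin n) ℝ) (b : Blk K m) (c : Fin K → ℝ)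
    (w : Blk K n) : HasGradientAt (Fobj A b c) (gradF A b c w) w := by
  obtain ⟨C, hC⟩ := qF_bound A c (n := n)
  exact hasGradientAt_of_quad C (fun v => Fobj_expand A b c w v) hC

lemma hasGradientAt_Qpen (A : Matrix (Fin m) (Fin n) ℝ) (b : Blk K m) (c : Fin K → ℝ)
    {η : ℝ} (hη : η ≠ 0) (w : Blk K n) :
    HasGradientAt (Qpen A b c η) (gradQ A b c η w) w := by
  obtain ⟨C, hC⟩ := qQ_bound A c η (n := n)
  exact hasGradientAt_of_quad C (fun v => Qpen_expand A b c η w v) hC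

lemma Smul_eq (A : Matrix (Fin m) (Fin n) ℝ) (x : EuclideanSpace ℝ (Fin n)) :
    Tmul A.transpose (Tmul A x) = Tmul (A.transpose * A) x := by
  refine PiLp.ext fun j => ?_
  simp only [Tmul_apply, Matrix.transpose_apply, Matrix.mul_apply, Finset.sum_mul,
    Finset.mul_sum]
  rw [Finset.sum_comm]
  apply Finset.sum_congr rfl; intro i _; apply Finset.sum_congr rfl; intro k _; ring

lemma rayleigh (A : Matrix (Fin m) (Fin n) ℝ) (lam : ℝ)
    (hlam : IsGreatest (spectrum ℝ (A.transpose * A)) lam)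
    (x : EuclideanSpace ℝ (Fin n)) : ‖Tmul A x‖^2 ≤ lam * ‖x‖^2 := by
  have hM : (A.transpose * A).IsHermitian := by
    simpa using Matrix.isHermitian_conjTranspose_mul_self A
  set B := hM.eigenvectorBasis with hB
  have heig : ∀ j, Tmul (A.transpose * A) (B j) = hM.eigenvalues j • B j := by
    intro j
    refine PiLp.ext fun i => ?_
    have := congrFun (hM.mulVec_eigenvectorBasis j) i
    simpa [Tmul_apply, Matrix.mulVec, dotProduct] using this
  have hsym : ∀ y z : EuclideanSpace ℝ (Fin n),
      ⟪y, Tmul (A.transpose * A) z⟫_ℝ = ⟪Tmul (A.transpose * A) y, z⟫_ℝ := by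
    intro y z
    rw [← Smul_eq, ← Smul_eq, real_inner_comm (Tmul A.transpose (Tmul A z)) y, Tadj_inner, Tadj_inner, real_inner_comm]
  have h0 : ‖Tmul A x‖^2 = ⟪x, Tmul (A.transpose * A) x⟫_ℝ := by
    rw [← real_inner_self_eq_norm_sq, ← Tadj_inner, Smul_eq, real_inner_comm]
  rw [h0, ← OrthonormalBasis.sum_inner_mul_inner B x (Tmul (A.transpose * A) x)]
  have hterm : ∀ j, ⟪x, B j⟫_ℝ * ⟪B j, Tmul (A.transpose * A) x⟫_ℝ
      = hM.eigenvalues j * (⟪x, B j⟫_ℝ)^2 := by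
    intro j
    rw [hsym (B j) x, heig j, real_inner_smul_left, real_inner_comm]
    ring
  rw [Finset.sum_congr rfl fun j _ => hterm j]
  have hlam2 : ∀ j, hM.eigenvalues j ≤ lam := fun j =>
    hlam.2 (hM.eigenvalues_mem_spectrum_real j)
  calc ∑ j, hM.eigenvalues j * (⟪x, B j⟫_ℝ)^2 ≤ ∑ j, lam * (⟪x, B j⟫_ℝ)^2 :=
        Finset.sum_le_sum fun j _ => mul_le_mul_of_nonneg_right (hlam2 j) (sq_nonneg _)
    _ = lam * ∑ j, ⟪x, B j⟫_ℝ * ⟪B j, x⟫_ℝ := by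
        rw [Finset.mul_sum]
        exact Finset.sum_congr rfl fun j _ => by rw [real_inner_comm x (B j)]; ring
    _ = lam * ‖x‖^2 := by rw [OrthonormalBasis.sum_inner_mul_inner, real_inner_self_eq_norm_sq]

lemma lam_pos (A : Matrix (Fin m) (Fin n) ℝ) (hA : A ≠ 0) (lam : ℝ)
    (hlam : IsGreatest (spectrum ℝ (A.transpose * A)) lam) : 0 < lam := by
  obtain ⟨i0, j0, hij⟩ : ∃ i j, A i j ≠ 0 := by
    by_contra h
    push_neg at h
    exact hA (by ext i j; simp [h i j])
  have hx := rayleigh A lam hlam (EuclideanSpace.single j0 1)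
  have h1 : ‖(EuclideanSpace.single j0 1 : EuclideanSpace ℝ (Fin n))‖^2 = 1 := by
    rw [EuclideanSpace.norm_single]; norm_num
  have h2 : Tmul A (EuclideanSpace.single j0 1) i0 = A i0 j0 := by
    rw [Tmul_apply]
    simp [EuclideanSpace.single_apply]
  have h3 : (A i0 j0)^2 ≤ ‖Tmul A (EuclideanSpace.single j0 1)‖^2 := by
    rw [PiLp.norm_sq_eq_of_L2]
    rw [← h2]
    have : ∀ i : Fin m, (0:ℝ) ≤ ‖Tmul A (EuclideanSpace.single j0 1) i‖^2 :=
      fun i => sq_nonneg _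
    refine le_trans ?_ (Finset.single_le_sum (fun i _ => this i) (Finset.mem_univ i0))
    rw [Real.norm_eq_abs, sq_abs]
  have h4 : 0 < (A i0 j0)^2 := by positivity
  nlinarith

end Stmt13

namespace Stmt13
variable {K m n : ℕ}

lemma Tmul_neg (A : Matrix (Fin m) (Fin n) ℝ) (x : EuclideanSpace ℝ (Fin n)) :
    Tmul A (-x) = -(Tmul A x) := by simp [Tmul]

lemma Tmul_smul (A : Matrix (Fin m) (Fin n) ℝ) (t : ℝ) (x : EuclideanSpace ℝ (Fin n)) :
    Tmul A (t • x) = t • Tmul A x := by simp [Tmul]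

lemma Dmap_smul (c : Fin K → ℝ) (t : ℝ) (v : Blk K n) : Dmap c (t • v) = t • Dmap c v := by
  simp only [Dmap]
  have h : ∀ i : Fin (K+1), (t • v) i = t • (v i) := fun _ => rfl
  rw [smul_sub, Finset.smul_sum, h]
  congr 1
  exact Finset.sum_congr rfl fun i _ => by rw [h, smul_comm]

lemma DmapT_norm_sq (c : Fin K → ℝ) (x : EuclideanSpace ℝ (Fin n)) :
    ‖DmapT c x‖^2 = (1 + ∑ i, c i^2) * ‖x‖^2 := by
  rw [blk_norm_sq, Fin.sum_univ_castSucc]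
  simp only [DmapT, PiLp.toLp_apply, Fin.snoc_castSucc, Fin.snoc_last]
  have : ∀ i : Fin K, ‖(-(c i) • x : EuclideanSpace ℝ (Fin n))‖^2 = c i^2 * ‖x‖^2 := by
    intro i
    rw [norm_smul, mul_pow, Real.norm_eq_abs]
    rw [show |(-(c i))|^2 = c i^2 from by rw [sq_abs]; ring]
  rw [Finset.sum_congr rfl fun i _ => this i, ← Finset.sum_mul]
  ring

/-- Hessian of `F` applied to `v` (as half of it, i.e. `H_F v` where
`F(w+v) = F(w) + ⟨∇F w, v⟩ + (1/2)⟨H_F v, v⟩`, here `HF v` has `⟨HF v, v⟩ = 2 qF v`). -/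
def HF (A : Matrix (Fin m) (Fin n) ℝ) (c : Fin K → ℝ) (v : Blk K n) : Blk K n :=
  WithLp.toLp 2 fun i => (2:ℝ) • Tmul A.transpose (Tmul A (v i)) -
    DmapT c (Tmul A.transpose (Tmul A (Dmap c v))) i

lemma DmapT_sub (c : Fin K → ℝ) (x y : EuclideanSpace ℝ (Fin n)) :
    DmapT c (x - y) = DmapT c x - DmapT c y := by
  refine PiLp.ext fun i => ?_
  refine Fin.lastCases ?_ (fun i => ?_) i <;>
    simp [DmapT, Fin.snoc_castSucc, Fin.snoc_last, smul_sub]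

lemma gradF_sub_eq (A : Matrix (Fin m) (Fin n) ℝ) (b : Blk K m) (c : Fin K → ℝ)
    (w₁ w₂ : Blk K n) : gradF A b c w₁ - gradF A b c w₂ = HF A c (w₁ - w₂) := by
  refine PiLp.ext fun i => ?_
  have h1 : (gradF A b c w₁ - gradF A b c w₂) i = gradF A b c w₁ i - gradF A b c w₂ i := rfl
  rw [h1]
  show ((2:ℝ) • Tmul A.transpose (Tmul A (w₁ i) - b i) -
      DmapT c (Tmul A.transpose (Tmul A (Dmap c w₁) - Dmap c b)) i) -
    ((2:ℝ) • Tmul A.transpose (Tmul A (w₂ i) - b i) -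
      DmapT c (Tmul A.transpose (Tmul A (Dmap c w₂) - Dmap c b)) i)
    = (2:ℝ) • Tmul A.transpose (Tmul A ((w₁ - w₂) i)) -
      DmapT c (Tmul A.transpose (Tmul A (Dmap c (w₁ - w₂)))) i
  have h2 : (w₁ - w₂) i = w₁ i - w₂ i := rfl
  have h3 : Tmul A.transpose (Tmul A ((w₁ - w₂) i))
      = Tmul A.transpose (Tmul A (w₁ i) - b i) - Tmul A.transpose (Tmul A (w₂ i) - b i) := by
    rw [h2]
    simp only [Tmul_sub]
    abel
  have h4 : Tmul A.transpose (Tmul A (Dmap c (w₁ - w₂)))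
      = Tmul A.transpose (Tmul A (Dmap c w₁) - Dmap c b)
        - Tmul A.transpose (Tmul A (Dmap c w₂) - Dmap c b) := by
    rw [Dmap_sub]
    simp only [Tmul_sub]
    abel
  rw [h3, h4, DmapT_sub]
  have h5 : (DmapT c (Tmul A.transpose (Tmul A (Dmap c w₁) - Dmap c b))
      - DmapT c (Tmul A.transpose (Tmul A (Dmap c w₂) - Dmap c b))) i
      = DmapT c (Tmul A.transpose (Tmul A (Dmap c w₁) - Dmap c b)) i
        - DmapT c (Tmul A.transpose (Tmul A (Dmap c w₂) - Dmap c b)) i := rfl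
  rw [h5, smul_sub]
  abel

lemma HF_inner (A : Matrix (Fin m) (Fin n) ℝ) (c : Fin K → ℝ) (v v' : Blk K n) :
    ⟪HF A c v, v'⟫_ℝ = 2*(∑ i, ⟪Tmul A (v i), Tmul A (v' i)⟫_ℝ)
      - ⟪Tmul A (Dmap c v), Tmul A (Dmap c v')⟫_ℝ := by
  rw [blk_inner]
  have hcomp : ∀ i : Fin (K+1), ⟪HF A c v i, v' i⟫_ℝ =
      2*⟪Tmul A (v i), Tmul A (v' i)⟫_ℝ
        - ⟪DmapT c (Tmul A.transpose (Tmul A (Dmap c v))) i, v' i⟫_ℝ := by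
    intro i
    have : HF A c v i = (2:ℝ) • Tmul A.transpose (Tmul A (v i)) -
        DmapT c (Tmul A.transpose (Tmul A (Dmap c v))) i := rfl
    rw [this, inner_sub_left, real_inner_smul_left, Tadj_inner]
  rw [Finset.sum_congr rfl fun i _ => hcomp i, Finset.sum_sub_distrib,
    DmapT_inner, Tadj_inner, Finset.mul_sum]

end Stmt13

namespace Stmt13
variable {K m n : ℕ}

/-- the bilinear form of the Hessian of `F`. -/
def Bf (A : Matrix (Fin m) (Fin n) ℝ) (c : Fin K → ℝ) (x y : Blk K n) : ℝ :=
  2*(∑ i, ⟪Tmul A (x i), Tmul A (y i)⟫_ℝ) - ⟪Tmul A (Dmap c x), Tmul A (Dmap c y)⟫_ℝ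

lemma HF_inner' (A : Matrix (Fin m) (Fin n) ℝ) (c : Fin K → ℝ) (v v' : Blk K n) :
    ⟪HF A c v, v'⟫_ℝ = Bf A c v v' := HF_inner A c v v'

lemma Bf_expand (A : Matrix (Fin m) (Fin n) ℝ) (c : Fin K → ℝ) (x y : Blk K n) (t : ℝ) :
    Bf A c (x + t • y) (x + t • y)
      = Bf A c x x + 2*t*(Bf A c x y) + t^2*(Bf A c y y) := by
  have h1 : ∀ (p q : EuclideanSpace ℝ (Fin m)) (t : ℝ),
      ⟪p + t•q, p + t•q⟫_ℝ = ⟪p,p⟫_ℝ + 2*(t*⟪p,q⟫_ℝ) + t^2*⟪q,q⟫_ℝ := by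
    intro p q t
    rw [real_inner_add_add_self, real_inner_smul_right, real_inner_smul_left,
      real_inner_smul_right]
    ring
  have h2 : ∀ i : Fin (K+1), Tmul A ((x + t • y) i) = Tmul A (x i) + t • Tmul A (y i) := by
    intro i
    have : (x + t • y) i = x i + t • (y i) := rfl
    rw [this, Tmul_add, Tmul_smul]
  have h3 : Tmul A (Dmap c (x + t • y)) = Tmul A (Dmap c x) + t • Tmul A (Dmap c y) := by
    rw [Dmap_add, Dmap_smul, Tmul_add, Tmul_smul]
  simp only [Bf, h2, h3, h1]
  rw [Finset.sum_add_distrib, Finset.sum_add_distrib,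
    show (∑ i, 2*(t*⟪Tmul A (x i), Tmul A (y i)⟫_ℝ))
        = 2*t*∑ i, ⟪Tmul A (x i), Tmul A (y i)⟫_ℝ from by
      rw [Finset.mul_sum]; exact Finset.sum_congr rfl fun i _ => by ring,
    show (∑ i, t^2*⟪Tmul A (y i), Tmul A (y i)⟫_ℝ)
        = t^2*∑ i, ⟪Tmul A (y i), Tmul A (y i)⟫_ℝ from by
      rw [Finset.mul_sum]]
  ring

lemma Bf_self_nonneg (A : Matrix (Fin m) (Fin n) ℝ) (c : Fin K → ℝ)
    (hc1 : ∑ i, c i^2 ≤ 1) (v : Blk K n) : 0 ≤ Bf A c v v := by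
  have h1 : ‖Tmul A (Dmap c v)‖^2 ≤ (1 + ∑ i, c i^2) * ∑ i, ‖Tmul A (v i)‖^2 :=
    Dmap_lin_bound c (Matrix.toEuclideanLin A) v
  have h2 : (0:ℝ) ≤ ∑ i, ‖Tmul A (v i)‖^2 := Finset.sum_nonneg fun i _ => sq_nonneg _
  have h3 : ∑ i, ⟪Tmul A (v i), Tmul A (v i)⟫_ℝ = ∑ i, ‖Tmul A (v i)‖^2 :=
    Finset.sum_congr rfl fun i _ => real_inner_self_eq_norm_sq _
  rw [Bf, h3, real_inner_self_eq_norm_sq]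
  nlinarith

lemma Bf_self_le (A : Matrix (Fin m) (Fin n) ℝ) (c : Fin K → ℝ) (lam : ℝ)
    (hray : ∀ x : EuclideanSpace ℝ (Fin n), ‖Tmul A x‖^2 ≤ lam * ‖x‖^2) (v : Blk K n) :
    Bf A c v v ≤ 2 * lam * ‖v‖^2 := by
  have h3 : ∑ i, ⟪Tmul A (v i), Tmul A (v i)⟫_ℝ = ∑ i, ‖Tmul A (v i)‖^2 :=
    Finset.sum_congr rfl fun i _ => real_inner_self_eq_norm_sq _
  have h4 : ∑ i, ‖Tmul A (v i)‖^2 ≤ lam * ∑ i, ‖v i‖^2 := by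
    rw [Finset.mul_sum]
    exact Finset.sum_le_sum fun i _ => hray (v i)
  have h5 : ⟪Tmul A (Dmap c v), Tmul A (Dmap c v)⟫_ℝ = ‖Tmul A (Dmap c v)‖^2 :=
    real_inner_self_eq_norm_sq _
  rw [Bf, h3, h5, blk_norm_sq]
  nlinarith [sq_nonneg ‖Tmul A (Dmap c v)‖]

lemma Bf_CS (A : Matrix (Fin m) (Fin n) ℝ) (c : Fin K → ℝ)
    (hc1 : ∑ i, c i^2 ≤ 1) (x y : Blk K n) :
    (Bf A c x y)^2 ≤ Bf A c x x * Bf A c y y := by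
  have key : ∀ t : ℝ, 0 ≤ (Bf A c y y)*(t*t) + (2*Bf A c x y)*t + Bf A c x x := by
    intro t
    have := Bf_self_nonneg A c hc1 (x + t • y)
    rw [Bf_expand] at this
    nlinarith
  have hd := discrim_le_zero key
  rw [discrim] at hd
  nlinarith [hd]

lemma HF_norm_le (A : Matrix (Fin m) (Fin n) ℝ) (c : Fin K → ℝ) (lam : ℝ)
    (hc1 : ∑ i, c i^2 ≤ 1) (hlam0 : 0 ≤ lam)
    (hray : ∀ x : EuclideanSpace ℝ (Fin n), ‖Tmul A x‖^2 ≤ lam * ‖x‖^2) (v : Blk K n) :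
    ‖HF A c v‖ ≤ 2 * lam * ‖v‖ := by
  by_cases h0 : ‖HF A c v‖ = 0
  · rw [h0]; positivity
  · have hpos : 0 < ‖HF A c v‖ := lt_of_le_of_ne (norm_nonneg _) (Ne.symm h0)
    have h1 : ‖HF A c v‖^2 = Bf A c v (HF A c v) := by
      rw [← HF_inner', real_inner_self_eq_norm_sq]
    have h2 := Bf_CS A c hc1 v (HF A c v)
    have h3 := Bf_self_le A c lam hray v
    have h4 := Bf_self_le A c lam hray (HF A c v)
    have h5 := Bf_self_nonneg A c hc1 v
    have h6 := Bf_self_nonneg A c hc1 (HF A c v)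
    have h7 : ‖HF A c v‖^4 ≤ (2*lam*‖v‖^2) * (2*lam*‖HF A c v‖^2) := by
      calc ‖HF A c v‖^4 = (‖HF A c v‖^2)^2 := by ring
        _ = (Bf A c v (HF A c v))^2 := by rw [h1]
        _ ≤ Bf A c v v * Bf A c (HF A c v) (HF A c v) := h2
        _ ≤ (2*lam*‖v‖^2) * (2*lam*‖HF A c v‖^2) := by nlinarith
    have hX2 : 0 < ‖HF A c v‖^2 := by positivity
    have h8 : ‖HF A c v‖^2 ≤ (2*lam*‖v‖)^2 := by nlinarith [hX2, h7]
    have hY : 0 ≤ 2*lam*‖v‖ := by positivity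
    rw [← Real.sqrt_sq (norm_nonneg (HF A c v)), ← Real.sqrt_sq hY]
    exact Real.sqrt_le_sqrt h8

end Stmt13

namespace Stmt13
variable {K m n : ℕ}

lemma sum_CS {ι : Type*} (t : Finset ι) (f g : ι → ℝ) :
    ∑ p ∈ t, f p * g p ≤ Real.sqrt (∑ p ∈ t, f p^2) * Real.sqrt (∑ p ∈ t, g p^2) := by
  rcases le_or_gt (∑ p ∈ t, f p * g p) 0 with h | h
  · exact le_trans h (by positivity)
  · have h2 : (∑ p ∈ t, f p * g p)^2 ≤ (∑ p ∈ t, f p^2) * (∑ p ∈ t, g p^2) :=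
      Finset.sum_mul_sq_le_sq_mul_sq t f g
    calc ∑ p ∈ t, f p * g p = Real.sqrt ((∑ p ∈ t, f p * g p)^2) :=
          (Real.sqrt_sq h.le).symm
      _ ≤ Real.sqrt ((∑ p ∈ t, f p^2) * (∑ p ∈ t, g p^2)) := Real.sqrt_le_sqrt h2
      _ = _ := Real.sqrt_mul (Finset.sum_nonneg fun p _ => sq_nonneg _) _

lemma blk_norm_sq_coords (x : Blk K n) :
    ‖x‖^2 = ∑ p : Fin (K+1) × Fin n, (x p.1 p.2)^2 := by
  rw [blk_norm_sq, Fintype.sum_prod_type]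
  exact Finset.sum_congr rfl fun i _ => eucl_norm_sq (x i)

lemma blk_norm_eq_sqrt (x : Blk K n) :
    ‖x‖ = Real.sqrt (∑ p : Fin (K+1) × Fin n, (x p.1 p.2)^2) := by
  rw [← blk_norm_sq_coords, Real.sqrt_sq (norm_nonneg _)]

lemma combine_sq (a bb r Nn dn : ℝ) (ha0 : 0 ≤ a) (hb0 : 0 ≤ bb) (hr0 : 0 ≤ r)
    (hNn0 : 0 ≤ Nn) (h1r : 1 + r^2 ≤ Nn) (habd : a^2 + bb^2 ≤ dn^2) :
    (a + r*bb)^2 ≤ Nn * dn^2 := by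
  have step1 : (a + r*bb)^2 ≤ (1+r^2)*(a^2+bb^2) := by nlinarith [sq_nonneg (r*a - bb)]
  have step2 : (1+r^2)*(a^2+bb^2) ≤ Nn*(a^2+bb^2) :=
    mul_le_mul_of_nonneg_right h1r (by positivity)
  have step3 : Nn*(a^2+bb^2) ≤ Nn*dn^2 := mul_le_mul_of_nonneg_left habd hNn0
  linarith

lemma qQ_neg (A : Matrix (Fin m) (Fin n) ℝ) (c : Fin K → ℝ) (η : ℝ) (v : Blk K n) :
    qQ A c η (-v) = qQ A c η v := by
  have h1 : ∀ i : Fin (K+1), (-v) i = -(v i) := fun _ => rfl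
  rw [qQ, qQ, qF, qF, Dmap_neg, Tmul_neg, norm_neg, norm_neg]
  congr 2
  exact Finset.sum_congr rfl fun i _ => by rw [h1, Tmul_neg, norm_neg]

end Stmt13


set_option maxHeartbeats 10000000 in
open Stmt13 in
/-- Optimality gap of an `η`-optimal solution of the penalized problem with respect to
the constrained problem: `Q(u;η) − F(u*) ≤ η C` with
`C = (5/2)√(Nn)‖u − u*‖ + √(Nn)‖∇F(u*)‖η + Nn η²`. -/
theorem stmt13 {K m n : ℕ} (A : Matrix (Fin m) (Fin n) ℝ) (b : Blk K m)
    (c : Fin K → ℝ) (hc : ∀ i, 0 ≤ c i) (hc1 : ∑ i, c i ^ 2 ≤ 1)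
    (hA : A ≠ 0)
    (lam : ℝ) (hlam : IsGreatest (spectrum ℝ (A.transpose * A)) lam)
    (η : ℝ) (hη0 : 0 < η) (hη : η ≤ (2 - ∑ i, c i ^ 2) / (4 * lam))
    (us : Blk K n) (hus0 : ∀ i j, 0 ≤ us i j) (husD : Dmap c us = 0)
    (husmin : ∀ w : Blk K n, (∀ i j, 0 ≤ w i j) → Dmap c w = 0 →
        Fobj A b c us ≤ Fobj A b c w)
    (u : Blk K n) (hu0 : ∀ i j, 0 ≤ u i j)
    (hJ : Real.sqrt (∑ i, ∑ j,
        if η ^ 2 < u i j then gradient (Qpen A b c η) u i j ^ 2 else 0) ≤ η)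
    (hlb : ∀ i j, -η ≤ gradient (Qpen A b c η) u i j) :
    Qpen A b c η u - Fobj A b c us ≤
      η * ((5 / 2) * Real.sqrt ((K + 1) * n) * ‖u - us‖
        + Real.sqrt ((K + 1) * n) * ‖gradient (Fobj A b c) us‖ * η
        + (K + 1) * n * η ^ 2) := by
  classical
  have hs0 : (0:ℝ) ≤ ∑ i, c i ^ 2 := Finset.sum_nonneg fun i _ => sq_nonneg _
  have hray : ∀ x : EuclideanSpace ℝ (Fin n), ‖Tmul A x‖^2 ≤ lam * ‖x‖^2 :=
    rayleigh A lam hlam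
  have hlampos : 0 < lam := lam_pos A hA lam hlam
  have h4le : 4 * lam * η ≤ 2 - ∑ i, c i ^ 2 := by
    rw [le_div_iff₀ (by positivity : (0:ℝ) < 4 * lam)] at hη
    linarith
  have hgQ : gradient (Qpen A b c η) u = gradQ A b c η u :=
    (hasGradientAt_Qpen A b c hη0.ne' u).gradient
  have hgF : gradient (Fobj A b c) us = gradF A b c us :=
    (hasGradientAt_Fobj A b c us).gradient
  rw [hgQ] at hJ hlb
  rw [hgF]
  set g := gradQ A b c η u with hgdef
  set gs := gradF A b c us with hgsdef
  set δ := u - us with hδdef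
  -- Step A : Qpen u − Fobj us ≤ ⟪g, δ⟫
  have hstepA : Qpen A b c η u - Fobj A b c us ≤ ⟪g, δ⟫_ℝ := by
    have hQus : Qpen A b c η us = Fobj A b c us := by
      rw [Qpen, husD]
      simp
    have hexp := Qpen_expand A b c η u (us - u)
    have hval : u + (us - u) = us := by abel
    rw [hval, hQus] at hexp
    have h1 : us - u = -δ := by rw [hδdef]; abel
    rw [h1, inner_neg_right, qQ_neg] at hexp
    have hq0 : 0 ≤ qQ A c η δ := by
      have hrayD := hray (Dmap c δ)
      have h2 : (0:ℝ) ≤ ∑ i, ‖Tmul A (δ i)‖^2 := Finset.sum_nonneg fun i _ => sq_nonneg _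
      have h3 : lam/2 ≤ 1/(4*η) := by
        rw [le_div_iff₀ (by positivity : (0:ℝ) < 4*η)]
        nlinarith
      rw [qQ, qF]
      have hTD : Tmul A (Dmap c δ) = Matrix.toEuclideanLin A (Dmap c δ) := rfl
      nlinarith [mul_le_mul_of_nonneg_right h3 (sq_nonneg ‖Dmap c δ‖)]
    have hTm : ∀ x, Matrix.toEuclideanLin A x = Tmul A x := fun _ => rfl
    linarith [hexp]
  -- coordinates
  have hip : ⟪g, δ⟫_ℝ = ∑ p : Fin (K+1) × Fin n, g p.1 p.2 * δ p.1 p.2 := by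
    rw [blk_inner, Fintype.sum_prod_type]
    exact Finset.sum_congr rfl fun i _ => eucl_inner _ _
  set Nn : ℝ := ((K:ℝ) + 1) * (n:ℝ) with hNn
  have hNn0 : 0 ≤ Nn := by positivity
  have hcard : (Fintype.card (Fin (K+1) × Fin n) : ℝ) = Nn := by
    rw [Fintype.card_prod, Fintype.card_fin, Fintype.card_fin]
    push_cast
    ring
  set J : Finset (Fin (K+1) × Fin n) :=
    Finset.univ.filter (fun p => η^2 < u p.1 p.2) with hJdef
  set Pc : Finset (Fin (K+1) × Fin n) :=
    Finset.univ.filter (fun p => ¬ η^2 < u p.1 p.2) with hPcdef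
  set Aset : Finset (Fin (K+1) × Fin n) :=
    Pc.filter (fun p => δ p.1 p.2 ≤ 0) with hAdef
  set Pset : Finset (Fin (K+1) × Fin n) :=
    Pc.filter (fun p => ¬ δ p.1 p.2 ≤ 0) with hPdef
  have hsplit : ∑ p : Fin (K+1) × Fin n, g p.1 p.2 * δ p.1 p.2
      = (∑ p ∈ J, g p.1 p.2 * δ p.1 p.2) + ((∑ p ∈ Aset, g p.1 p.2 * δ p.1 p.2)
        + (∑ p ∈ Pset, g p.1 p.2 * δ p.1 p.2)) := by
    rw [← Finset.sum_filter_add_sum_filter_not Finset.univ (fun p => η^2 < u p.1 p.2),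
      ← Finset.sum_filter_add_sum_filter_not Pc (fun p => δ p.1 p.2 ≤ 0)]
  -- J ∪ A part
  have hJA : (∑ p ∈ J, g p.1 p.2 * δ p.1 p.2) + (∑ p ∈ Aset, g p.1 p.2 * δ p.1 p.2)
      ≤ η * Real.sqrt Nn * ‖δ‖ := by
    have hgJ2 : ∑ p ∈ J, (g p.1 p.2)^2 ≤ η^2 := by
      have hite : ∑ p ∈ J, (g p.1 p.2)^2
          = ∑ i, ∑ j, if η^2 < u i j then g i j ^2 else 0 := by
        rw [hJdef, Finset.sum_filter, Fintype.sum_prod_type]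
      have hnn : (0:ℝ) ≤ ∑ i, ∑ j, if η^2 < u i j then g i j ^2 else 0 :=
        Finset.sum_nonneg fun i _ => Finset.sum_nonneg fun j _ => by positivity
      rw [hite, ← Real.sq_sqrt hnn]
      exact pow_le_pow_left₀ (Real.sqrt_nonneg _) hJ 2
    have hJcs : ∑ p ∈ J, g p.1 p.2 * δ p.1 p.2
        ≤ η * Real.sqrt (∑ p ∈ J, (δ p.1 p.2)^2) := by
      refine le_trans (sum_CS J _ _) ?_
      have h1 : Real.sqrt (∑ p ∈ J, (g p.1 p.2)^2) ≤ η := by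
        rw [show η = Real.sqrt (η^2) from (Real.sqrt_sq hη0.le).symm]
        exact Real.sqrt_le_sqrt hgJ2
      exact mul_le_mul_of_nonneg_right h1 (Real.sqrt_nonneg _)
    have hAcs : ∑ p ∈ Aset, g p.1 p.2 * δ p.1 p.2
        ≤ η * (Real.sqrt (Aset.card) * Real.sqrt (∑ p ∈ Aset, (δ p.1 p.2)^2)) := by
      have h1 : ∀ p ∈ Aset, g p.1 p.2 * δ p.1 p.2 ≤ η * (-δ p.1 p.2) := by
        intro p hp
        have hd0 : δ p.1 p.2 ≤ 0 := (Finset.mem_filter.mp hp).2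
        have hg := hlb p.1 p.2
        nlinarith
      refine le_trans (Finset.sum_le_sum h1) ?_
      rw [← Finset.mul_sum]
      refine mul_le_mul_of_nonneg_left ?_ hη0.le
      have h2 := sum_CS Aset (fun _ => (1:ℝ)) (fun p => -δ p.1 p.2)
      calc ∑ p ∈ Aset, -δ p.1 p.2 = ∑ p ∈ Aset, (1:ℝ) * (-δ p.1 p.2) := by
            exact Finset.sum_congr rfl fun p _ => (one_mul _).symm
        _ ≤ Real.sqrt (∑ p ∈ Aset, (1:ℝ)^2) * Real.sqrt (∑ p ∈ Aset, (-δ p.1 p.2)^2) := h2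
        _ = Real.sqrt (Aset.card) * Real.sqrt (∑ p ∈ Aset, (δ p.1 p.2)^2) := by
            congr 2
            · simp
            · exact Finset.sum_congr rfl fun p _ => by ring
    have hdisjJPc : Disjoint J Pc := by
      rw [hJdef, hPcdef]
      exact Finset.disjoint_filter_filter_not Finset.univ Finset.univ _
    have hdisj : Disjoint J Aset := hdisjJPc.mono_right (Finset.filter_subset _ _)
    have hsum2 : (∑ p ∈ J, (δ p.1 p.2)^2) + (∑ p ∈ Aset, (δ p.1 p.2)^2) ≤ ‖δ‖^2 := by
      rw [blk_norm_sq_coords, ← Finset.sum_union hdisj]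
      exact Finset.sum_le_sum_of_subset_of_nonneg (Finset.subset_univ _)
        (fun p _ _ => sq_nonneg _)
    have hJd0 : (0:ℝ) ≤ ∑ p ∈ J, (δ p.1 p.2)^2 := Finset.sum_nonneg fun p _ => sq_nonneg _
    have hAd0 : (0:ℝ) ≤ ∑ p ∈ Aset, (δ p.1 p.2)^2 := Finset.sum_nonneg fun p _ => sq_nonneg _
    set a := Real.sqrt (∑ p ∈ J, (δ p.1 p.2)^2) with hadef
    set bb := Real.sqrt (∑ p ∈ Aset, (δ p.1 p.2)^2) with hbbdef
    have ha2 : a^2 = ∑ p ∈ J, (δ p.1 p.2)^2 := Real.sq_sqrt hJd0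
    have hb2 : bb^2 = ∑ p ∈ Aset, (δ p.1 p.2)^2 := Real.sq_sqrt hAd0
    have ha0 : 0 ≤ a := Real.sqrt_nonneg _
    have hb0 : 0 ≤ bb := Real.sqrt_nonneg _
    rcases Finset.eq_empty_or_nonempty J with hJe | hJne
    · have hz : ∑ p ∈ J, g p.1 p.2 * δ p.1 p.2 = 0 := by rw [hJe]; simp
      have hcardA : ((Aset.card : ℕ) : ℝ) ≤ Nn := by
        rw [← hcard]
        exact_mod_cast Finset.card_le_card (Finset.subset_univ Aset)
      have hbd : bb ≤ ‖δ‖ := by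
        rw [hbbdef, show ‖δ‖ = Real.sqrt (‖δ‖^2) from (Real.sqrt_sq (norm_nonneg _)).symm]
        exact Real.sqrt_le_sqrt (by linarith)
      have hrd : Real.sqrt (Aset.card) ≤ Real.sqrt Nn := Real.sqrt_le_sqrt hcardA
      rw [hz, zero_add]
      calc ∑ p ∈ Aset, g p.1 p.2 * δ p.1 p.2
          ≤ η * (Real.sqrt (Aset.card) * bb) := hAcs
        _ ≤ η * (Real.sqrt Nn * ‖δ‖) := by
            refine mul_le_mul_of_nonneg_left ?_ hη0.le
            exact mul_le_mul hrd hbd hb0 (Real.sqrt_nonneg _)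
        _ = η * Real.sqrt Nn * ‖δ‖ := by ring
    · have hcard1 : Aset.card + 1 ≤ Fintype.card (Fin (K+1) × Fin n) := by
        have h1 : 1 ≤ J.card := Finset.card_pos.mpr hJne
        have h2 : (J ∪ Aset).card = J.card + Aset.card := Finset.card_union_of_disjoint hdisj
        have h3 : (J ∪ Aset).card ≤ Fintype.card (Fin (K+1) × Fin n) := by
          rw [← Finset.card_univ]
          exact Finset.card_le_card (Finset.subset_univ _)
        omega
      have hcardA : ((Aset.card : ℕ) : ℝ) ≤ Nn - 1 := by
        have : ((Aset.card + 1 : ℕ) : ℝ) ≤ ((Fintype.card (Fin (K+1) × Fin n) : ℕ) : ℝ) :=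
          Nat.cast_le.mpr hcard1
        rw [hcard] at this
        push_cast at this
        linarith
      set r := Real.sqrt (Aset.card) with hrdef
      have hr0 : 0 ≤ r := Real.sqrt_nonneg _
      have hr2 : r^2 = Aset.card := Real.sq_sqrt (Nat.cast_nonneg _)
      have key : (a + r*bb)^2 ≤ Nn * ‖δ‖^2 := by
        have h1r : 1 + r^2 ≤ Nn := by rw [hr2]; linarith
        have habd : a^2 + bb^2 ≤ ‖δ‖^2 := by rw [ha2, hb2]; exact hsum2
        exact combine_sq a bb r Nn ‖δ‖ ha0 hb0 hr0 hNn0 h1r habd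
      have hab0 : 0 ≤ a + r*bb := by
        have := mul_nonneg hr0 hb0
        linarith
      have hfin2 : a + r*bb ≤ Real.sqrt Nn * ‖δ‖ := by
        rw [show Real.sqrt Nn * ‖δ‖ = Real.sqrt (Nn * ‖δ‖^2) from by
          rw [Real.sqrt_mul hNn0, Real.sqrt_sq (norm_nonneg _)]]
        rw [← Real.sqrt_sq hab0]
        exact Real.sqrt_le_sqrt key
      calc (∑ p ∈ J, g p.1 p.2 * δ p.1 p.2) + (∑ p ∈ Aset, g p.1 p.2 * δ p.1 p.2)
          ≤ η * a + η * (r * bb) := add_le_add hJcs hAcs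
        _ = η * (a + r*bb) := by ring
        _ ≤ η * (Real.sqrt Nn * ‖δ‖) := mul_le_mul_of_nonneg_left hfin2 hη0.le
        _ = η * Real.sqrt Nn * ‖δ‖ := by ring
  -- P part
  have hP : (∑ p ∈ Pset, g p.1 p.2 * δ p.1 p.2)
      ≤ (‖gs‖ + 2*lam*‖δ‖ + (1/(2*η))*(1 + ∑ i, c i ^ 2)*‖δ‖) * (Real.sqrt Nn * η^2) := by
    -- gradient decomposition
    have hgidvec : g = gs + HF A c δ + (1/(2*η)) • DmapT c (Dmap c δ) := by
      have h1 : gradF A b c u - gradF A b c us = HF A c δ := by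
        rw [hδdef]
        exact gradF_sub_eq A b c u us
      have h2 : Dmap c u = Dmap c δ := by rw [hδdef, Dmap_sub, husD, sub_zero]
      have h3 : gradF A b c u = gs + HF A c δ := by
        rw [hgsdef, ← h1]
        abel
      rw [hgdef]
      show gradF A b c u + (1/(2*η)) • DmapT c (Dmap c u)
        = gs + HF A c δ + (1/(2*η)) • DmapT c (Dmap c δ)
      rw [h3, h2]
    have hgid : ∀ p : Fin (K+1) × Fin n, g p.1 p.2 = gs p.1 p.2 + HF A c δ p.1 p.2
        + (1/(2*η)) * DmapT c (Dmap c δ) p.1 p.2 := by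
      intro p
      rw [hgidvec]
      rfl
    have hsplitP : ∑ p ∈ Pset, g p.1 p.2 * δ p.1 p.2
        = (∑ p ∈ Pset, gs p.1 p.2 * δ p.1 p.2)
          + (∑ p ∈ Pset, HF A c δ p.1 p.2 * δ p.1 p.2)
          + (1/(2*η)) * (∑ p ∈ Pset, DmapT c (Dmap c δ) p.1 p.2 * δ p.1 p.2) := by
      rw [Finset.mul_sum, ← Finset.sum_add_distrib, ← Finset.sum_add_distrib]
      refine Finset.sum_congr rfl fun p hp => ?_
      rw [hgid p]
      ring
    -- bound on small coordinates
    have hδP2 : ∑ p ∈ Pset, (δ p.1 p.2)^2 ≤ Nn * η^4 := by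
      have hper : ∀ p ∈ Pset, (δ p.1 p.2)^2 ≤ η^4 := by
        intro p hp
        have hp1 := Finset.mem_filter.mp hp
        have hp2 := Finset.mem_filter.mp hp1.1
        have hu : ¬ η^2 < u p.1 p.2 := hp2.2
        have hd : ¬ δ p.1 p.2 ≤ 0 := hp1.2
        push_neg at hd
        have hδu : δ p.1 p.2 ≤ u p.1 p.2 := by
          have : δ p.1 p.2 = u p.1 p.2 - us p.1 p.2 := by rw [hδdef]; rfl
          rw [this]
          linarith [hus0 p.1 p.2]
        have h1 : δ p.1 p.2 ≤ η^2 := le_trans hδu (not_lt.mp hu)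
        nlinarith
      calc ∑ p ∈ Pset, (δ p.1 p.2)^2 ≤ ∑ _p ∈ Pset, η^4 := Finset.sum_le_sum hper
        _ = Pset.card * η^4 := by rw [Finset.sum_const, nsmul_eq_mul]
        _ ≤ Nn * η^4 := by
            refine mul_le_mul_of_nonneg_right ?_ (by positivity)
            rw [← hcard]
            exact_mod_cast Finset.card_le_card (Finset.subset_univ Pset)
    have hδPs : Real.sqrt (∑ p ∈ Pset, (δ p.1 p.2)^2) ≤ Real.sqrt Nn * η^2 := by
      refine le_trans (Real.sqrt_le_sqrt hδP2) ?_
      rw [Real.sqrt_mul hNn0, show (η^4 : ℝ) = (η^2)^2 from by ring,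
        Real.sqrt_sq (sq_nonneg η)]
    -- generic coordinate Cauchy–Schwarz against a block vector
    have hCSvec : ∀ X : Blk K n, ∑ p ∈ Pset, X p.1 p.2 * δ p.1 p.2
        ≤ ‖X‖ * (Real.sqrt Nn * η^2) := by
      intro X
      refine le_trans (sum_CS Pset (fun p => X p.1 p.2) (fun p => δ p.1 p.2)) ?_
      have h1 : Real.sqrt (∑ p ∈ Pset, (X p.1 p.2)^2) ≤ ‖X‖ := by
        rw [blk_norm_eq_sqrt]
        refine Real.sqrt_le_sqrt ?_
        exact Finset.sum_le_sum_of_subset_of_nonneg (Finset.subset_univ _)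
          (fun p _ _ => sq_nonneg _)
      exact mul_le_mul h1 hδPs (Real.sqrt_nonneg _) (norm_nonneg _)
    -- three term bounds
    have hb1 : ∑ p ∈ Pset, gs p.1 p.2 * δ p.1 p.2 ≤ ‖gs‖ * (Real.sqrt Nn * η^2) := hCSvec gs
    have hHFn : ‖HF A c δ‖ ≤ 2*lam*‖δ‖ := HF_norm_le A c lam hc1 hlampos.le hray δ
    have hb2 : ∑ p ∈ Pset, HF A c δ p.1 p.2 * δ p.1 p.2 ≤ 2*lam*‖δ‖ * (Real.sqrt Nn * η^2) := by
      refine le_trans (hCSvec (HF A c δ)) ?_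
      exact mul_le_mul_of_nonneg_right hHFn (by positivity)
    have hDDn : ‖DmapT c (Dmap c δ)‖ ≤ (1 + ∑ i, c i ^ 2) * ‖δ‖ := by
      have e1 : ‖DmapT c (Dmap c δ)‖^2 = (1 + ∑ i, c i ^ 2) * ‖Dmap c δ‖^2 :=
        DmapT_norm_sq c (Dmap c δ)
      have e2 : ‖Dmap c δ‖^2 ≤ (1 + ∑ i, c i ^ 2) * ‖δ‖^2 := by
        have := Dmap_lin_bound c (LinearMap.id (R := ℝ) (M := EuclideanSpace ℝ (Fin n))) δ
        simp only [LinearMap.id_coe, id_eq] at this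
        rw [blk_norm_sq]
        exact this
      have e3 : ‖DmapT c (Dmap c δ)‖^2 ≤ ((1 + ∑ i, c i ^ 2) * ‖δ‖)^2 := by
        rw [e1]
        calc (1 + ∑ i, c i ^ 2) * ‖Dmap c δ‖^2
            ≤ (1 + ∑ i, c i ^ 2) * ((1 + ∑ i, c i ^ 2) * ‖δ‖^2) :=
              mul_le_mul_of_nonneg_left e2 (by linarith)
          _ = ((1 + ∑ i, c i ^ 2) * ‖δ‖)^2 := by ring
      rw [← Real.sqrt_sq (norm_nonneg (DmapT c (Dmap c δ))),
        ← Real.sqrt_sq (by positivity : (0:ℝ) ≤ (1 + ∑ i, c i ^ 2) * ‖δ‖)]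
      exact Real.sqrt_le_sqrt e3
    have hb3 : ∑ p ∈ Pset, DmapT c (Dmap c δ) p.1 p.2 * δ p.1 p.2
        ≤ (1 + ∑ i, c i ^ 2) * ‖δ‖ * (Real.sqrt Nn * η^2) := by
      refine le_trans (hCSvec (DmapT c (Dmap c δ))) ?_
      exact mul_le_mul_of_nonneg_right hDDn (by positivity)
    have hη2 : (0:ℝ) ≤ 1/(2*η) := by positivity
    rw [hsplitP]
    have hb3' : (1/(2*η)) * (∑ p ∈ Pset, DmapT c (Dmap c δ) p.1 p.2 * δ p.1 p.2)
        ≤ (1/(2*η)) * ((1 + ∑ i, c i ^ 2) * ‖δ‖ * (Real.sqrt Nn * η^2)) :=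
      mul_le_mul_of_nonneg_left hb3 hη2
    nlinarith [hb1, hb2, hb3']
  -- final arithmetic
  have hfin : (‖gs‖ + 2*lam*‖δ‖ + (1/(2*η))*(1 + ∑ i, c i ^ 2)*‖δ‖) * (Real.sqrt Nn * η^2)
      ≤ ‖gs‖ * Real.sqrt Nn * η^2 + (3/2) * η * Real.sqrt Nn * ‖δ‖ := by
    have e2 : (1/(2*η))*(1 + ∑ i, c i ^ 2)*‖δ‖*η^2 = (1 + ∑ i, c i ^ 2)*‖δ‖*η/2 := by
      field_simp
    have key : 2*lam*‖δ‖*η^2 + (1/(2*η))*(1 + ∑ i, c i ^ 2)*‖δ‖*η^2 ≤ (3/2)*η*‖δ‖ := by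
      rw [e2]
      have h1 : 2*lam*η ≤ (2 - ∑ i, c i ^ 2)/2 := by linarith
      have h2 : 0 ≤ η*‖δ‖ := by positivity
      nlinarith [norm_nonneg δ, mul_le_mul_of_nonneg_right h1 h2]
    have key2 : (2*lam*‖δ‖ + (1/(2*η))*(1 + ∑ i, c i ^ 2)*‖δ‖) * (Real.sqrt Nn * η^2)
        ≤ (3/2) * η * Real.sqrt Nn * ‖δ‖ := by
      have := mul_le_mul_of_nonneg_left key (Real.sqrt_nonneg Nn)
      nlinarith [this]
    nlinarith [key2]
  have hNncast : Real.sqrt ((K + 1) * n) = Real.sqrt Nn := by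
    norm_num [hNn]
  rw [hNncast]
  have hrhs : 0 ≤ η * (Nn * η^2) := by positivity
  calc Qpen A b c η u - Fobj A b c us ≤ ⟪g, δ⟫_ℝ := hstepA
    _ = _ := hip
    _ ≤ η * Real.sqrt Nn * ‖δ‖ + (‖gs‖ + 2*lam*‖δ‖ + (1/(2*η))*(1 + ∑ i, c i ^ 2)*‖δ‖)
          * (Real.sqrt Nn * η^2) := by rw [hsplit]; linarith
    _ ≤ η * Real.sqrt Nn * ‖δ‖ + (‖gs‖ * Real.sqrt Nn * η^2 + (3/2) * η * Real.sqrt Nn * ‖δ‖) := by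
        linarith
    _ ≤ η * ((5 / 2) * Real.sqrt Nn * ‖δ‖ + Real.sqrt Nn * ‖gs‖ * η + Nn * η ^ 2) := by
        nlinarith [Real.sqrt_nonneg Nn, norm_nonneg δ, norm_nonneg gs]
    _ = η * ((5 / 2) * Real.sqrt Nn * ‖δ‖ + Real.sqrt Nn * ‖gs‖ * η + (K+1) * n * η ^ 2) := by
        rw [hNn]
end
end

section
/- Suppose η > 0 satisfies 2η λ_max(AᵀA) ≤ 1, and let u* ∈ ℝ^{Nn} with u* ≥ 0 and Du* = 0. Then for every u ∈ ℝ^{Nn}, Q(u;η) − F(u*) ≥ f(u) − f(u*) − ‖Aᵀ(Db)‖ · ‖Du‖. -/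
/-!
Write `d = Du` and `e = Db`. Since `Du* = 0`, `F(u*) = f(u*) − ½‖e‖²`, so
`Q(u;η) − F(u*) − (f(u) − f(u*)) = ½‖e‖² − ½‖Ad − e‖² + ‖d‖²/(4η) = ⟪d, Aᵀe⟫ − ½‖Ad‖² + ‖d‖²/(4η)`.
Cauchy–Schwarz bounds `⟪d, Aᵀe⟫` below by `−‖Aᵀe‖‖d‖`, and the Rayleigh bound
`‖Ad‖² ≤ λ_max(AᵀA)‖d‖² ≤ ‖d‖²/(2η)` makes the remaining terms nonnegative.
-/

open scoped BigOperators InnerProductSpace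

noncomputable section

open scoped MatrixOrder

namespace Matrix

variable {m n : Type*} [Fintype m] [Fintype n] [DecidableEq m] [DecidableEq n]

theorem toEuclideanLin_transpose_eq_adjoint (A : Matrix m n ℝ) :
    Aᵀ.toEuclideanLin = LinearMap.adjoint A.toEuclideanLin := by
  rw [← toEuclideanLin_conjTranspose_eq_adjoint, conjTranspose_eq_transpose_of_trivial]

theorem inner_toEuclideanLin_transpose_mul_self (A : Matrix m n ℝ) (v : EuclideanSpace ℝ n) :
    ⟪(Aᵀ * A).toEuclideanLin v, v⟫_ℝ = ‖A.toEuclideanLin v‖ ^ 2 := by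
  rw [toLpLin_mul_same, LinearMap.comp_apply, toEuclideanLin_transpose_eq_adjoint,
    LinearMap.adjoint_inner_left, real_inner_self_eq_norm_sq]

theorem norm_toEuclideanLin_sq_le (A : Matrix m n ℝ) {lam : ℝ}
    (hlam : lam ∈ upperBounds (spectrum ℝ (Aᵀ * A))) (v : EuclideanSpace ℝ n) :
    ‖A.toEuclideanLin v‖ ^ 2 ≤ lam * ‖v‖ ^ 2 := by
  have hsa : IsSelfAdjoint (Aᵀ * A) := by
    simpa only [conjTranspose_eq_transpose_of_trivial] using
      (isHermitian_conjTranspose_mul_self A).isSelfAdjoint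
  -- the functional calculus (whose side condition `hsa` discharges) gives `AᵀA ≤ λ • 1`
  -- in the Loewner order
  have hle : Aᵀ * A ≤ algebraMap ℝ _ lam := le_algebraMap_of_spectrum_le hlam
  have hpos := (isPositive_toEuclideanLin_iff.mpr (le_iff.mp hle)).inner_nonneg_left v
  rw [map_sub, LinearMap.sub_apply, inner_sub_left, Algebra.algebraMap_eq_smul_one, map_smul,
    toLpLin_one, LinearMap.smul_apply, LinearMap.id_apply, real_inner_smul_left,
    real_inner_self_eq_norm_sq, inner_toEuclideanLin_transpose_mul_self] at hpos
  linarith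

theorem neg_norm_mul_norm_sub_le_half_norm_sq_sub (A : Matrix m n ℝ) (d : EuclideanSpace ℝ n)
    (e : EuclideanSpace ℝ m) :
    -(‖Aᵀ.toEuclideanLin e‖ * ‖d‖) - (1 / 2) * ‖A.toEuclideanLin d‖ ^ 2
      ≤ (1 / 2) * ‖e‖ ^ 2 - (1 / 2) * ‖A.toEuclideanLin d - e‖ ^ 2 := by
  have hadj : ⟪A.toEuclideanLin d, e⟫_ℝ = ⟪d, Aᵀ.toEuclideanLin e⟫_ℝ := by
    rw [toEuclideanLin_transpose_eq_adjoint, LinearMap.adjoint_inner_right]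
  have hcs : -(‖Aᵀ.toEuclideanLin e‖ * ‖d‖) ≤ ⟪d, Aᵀ.toEuclideanLin e⟫_ℝ := by
    rw [mul_comm]
    exact (neg_le_neg (abs_real_inner_le_norm _ _)).trans (neg_abs_le _)
  rw [norm_sub_sq_real, hadj]
  linarith

end Matrix

theorem Fobj_of_Dmap_eq_zero {K m n : ℕ} (A : Matrix (Fin m) (Fin n) ℝ) (b : Blk K m)
    (c : Fin K → ℝ) {w : Blk K n} (hw : Dmap c w = 0) :
    Fobj A b c w = fobj A b w - (1 / 2) * ‖Dmap c b‖ ^ 2 := by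
  simp [Fobj, hw]

theorem half_mul_le_inv_four_mul {lam η x : ℝ} (hη0 : 0 < η) (hη : 2 * η * lam ≤ 1)
    (hx : 0 ≤ x) : (1 / 2) * (lam * x) ≤ (1 / (4 * η)) * x := by
  have hlam : lam ≤ 1 / (2 * η) := by
    rw [le_div_iff₀ (by positivity)]
    linarith
  calc (1 / 2) * (lam * x) ≤ (1 / 2) * ((1 / (2 * η)) * x) := by gcongr
    _ = (1 / (4 * η)) * x := by field_simp; ring

theorem stmt18_general {K m n : ℕ} (A : Matrix (Fin m) (Fin n) ℝ) (b : Blk K m)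
    (c : Fin K → ℝ)
    (lam : ℝ) (hlam : IsGreatest (spectrum ℝ (A.transpose * A)) lam)
    (η : ℝ) (hη0 : 0 < η) (hη : 2 * η * lam ≤ 1)
    (us : Blk K n) (husD : Dmap c us = 0) :
    ∀ u : Blk K n,
      fobj A b u - fobj A b us
          - ‖Matrix.toEuclideanLin A.transpose (Dmap c b)‖ * ‖Dmap c u‖
        ≤ Qpen A b c η u - Fobj A b c us := by
  intro u
  have hcross := A.neg_norm_mul_norm_sub_le_half_norm_sq_sub (Dmap c u) (Dmap c b)
  have hpenalty : (1 / 2) * ‖A.toEuclideanLin (Dmap c u)‖ ^ 2 ≤ (1 / (4 * η)) * ‖Dmap c u‖ ^ 2 :=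
    calc (1 / 2) * ‖A.toEuclideanLin (Dmap c u)‖ ^ 2
        ≤ (1 / 2) * (lam * ‖Dmap c u‖ ^ 2) := by
          gcongr; exact A.norm_toEuclideanLin_sq_le hlam.2 _
      _ ≤ (1 / (4 * η)) * ‖Dmap c u‖ ^ 2 := half_mul_le_inv_four_mul hη0 hη (sq_nonneg _)
  rw [Qpen, Fobj, Fobj_of_Dmap_eq_zero A b c husD]
  linarith

/-- Lower bound on the penalty optimality gap: if `2η λ_max(AᵀA) ≤ 1` and `u* ≥ 0`
with `Du* = 0`, then `Q(u;η) − F(u*) ≥ f(u) − f(u*) − ‖Aᵀ(Db)‖‖Du‖` for all `u`. -/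
theorem stmt18 {K m n : ℕ} (A : Matrix (Fin m) (Fin n) ℝ) (b : Blk K m)
    (c : Fin K → ℝ) (hc : ∀ i, 0 ≤ c i)
    (lam : ℝ) (hlam : IsGreatest (spectrum ℝ (A.transpose * A)) lam)
    (η : ℝ) (hη0 : 0 < η) (hη : 2 * η * lam ≤ 1)
    (us : Blk K n) (hus0 : ∀ i j, 0 ≤ us i j) (husD : Dmap c us = 0) :
    ∀ u : Blk K n,
      fobj A b u - fobj A b us
          - ‖Matrix.toEuclideanLin A.transpose (Dmap c b)‖ * ‖Dmap c u‖
        ≤ Qpen A b c η u - Fobj A b c us :=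
  stmt18_general A b c lam hlam η hη0 hη us husD
end
end
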